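/- Let a ∈ ℝ and suppose B⁺ₐ < ∞. Then for every F ∈ 𝓕, ∫_{(a,∞)} (F(x) − F(a))² dm(x) ≤ 4·B⁺ₐ · ∫_{(a,∞)} (dF/dS)²(t) dS(t). In particular the optimal Hardy constant over (a,∞) is at most 4·B⁺ₐ. -/

import Mathlib

open MeasureTheory Set
open scoped ENNReal

namespace HardyAux

lemma aux_Ioc_rpow {c : ℝ} (hc : 0 ≤ c) :
    ∫⁻ v in Ioc (0:ℝ) c, ENNReal.ofReal v ^ (-(1/2) : ℝ) = ENNReal.ofReal (2 * Real.sqrt c) := by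
  have hint : IntegrableOn (fun v : ℝ => v ^ (-(1/2) : ℝ)) (Ioc 0 c) := by
    rw [← intervalIntegrable_iff_integrableOn_Ioc_of_le hc]
    exact intervalIntegral.intervalIntegrable_rpow' (by norm_num)
  have h1 : ∫⁻ v in Ioc (0:ℝ) c, ENNReal.ofReal v ^ (-(1/2) : ℝ)
      = ∫⁻ v in Ioc (0:ℝ) c, ENNReal.ofReal (v ^ (-(1/2) : ℝ)) := by
    refine setLIntegral_congr_fun measurableSet_Ioc (fun v hv => ?_)
    rw [ENNReal.ofReal_rpow_of_pos hv.1]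
  rw [h1, ← ofReal_integral_eq_lintegral_ofReal hint
    ((ae_restrict_iff' measurableSet_Ioc).2 (Filter.Eventually.of_forall
      fun v hv => Real.rpow_nonneg hv.1.le _))]
  congr 1
  rw [← intervalIntegral.integral_of_le hc, integral_rpow (Or.inl (by norm_num))]
  have h2 : (-(1/2) : ℝ) + 1 = 1/2 := by norm_num
  rw [h2, Real.zero_rpow (by norm_num), Real.sqrt_eq_rpow]
  ring

lemma aux_Ioi_rpow {c : ℝ} (hc : 0 < c) :
    ∫⁻ v in Ioi c, ENNReal.ofReal v ^ (-(3/2) : ℝ) = ENNReal.ofReal (2 / Real.sqrt c) := by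
  have hint : IntegrableOn (fun v : ℝ => v ^ (-(3/2) : ℝ)) (Ioi c) :=
    integrableOn_Ioi_rpow_of_lt (by norm_num) hc
  have h1 : ∫⁻ v in Ioi c, ENNReal.ofReal v ^ (-(3/2) : ℝ)
      = ∫⁻ v in Ioi c, ENNReal.ofReal (v ^ (-(3/2) : ℝ)) := by
    refine setLIntegral_congr_fun measurableSet_Ioi (fun v hv => ?_)
    rw [ENNReal.ofReal_rpow_of_pos (hc.trans hv)]
  rw [h1, ← ofReal_integral_eq_lintegral_ofReal hint
    ((ae_restrict_iff' measurableSet_Ioi).2 (Filter.Eventually.of_forall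
      fun v hv => Real.rpow_nonneg (hc.trans hv).le _))]
  congr 1
  rw [integral_Ioi_rpow_of_lt (by norm_num) hc]
  have h2 : (-(3/2) : ℝ) + 1 = -(1/2) := by norm_num
  rw [h2, Real.rpow_neg hc.le, Real.sqrt_eq_rpow]
  ring

lemma lintegral_shift (α : ℝ) (g : ℝ → ℝ≥0∞) (A : Set ℝ) :
    ∫⁻ v in (fun v : ℝ => v + α) ⁻¹' A, g (v + α) = ∫⁻ u in A, g u :=
  (measurePreserving_add_right volume α).setLIntegral_comp_preimage_emb
    (Homeomorph.addRight α).isClosedEmbedding.measurableEmbedding g A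

lemma swap_lemma (μ ν : Measure ℝ) [IsFiniteMeasure μ] [SigmaFinite ν]
    (g h : ℝ → ℝ≥0∞) (hg : Measurable g) (hh : Measurable h)
    (c : ℝ) (A : Set ℝ) (hA : MeasurableSet A) :
    ∫⁻ x in A, g x * ∫⁻ t in Ioc c x, h t ∂ν ∂μ
      = ∫⁻ t in Ioi c, h t * ∫⁻ x in Ici t, g x ∂(μ.restrict A) ∂ν := by
  set s : Set (ℝ × ℝ) := {p : ℝ × ℝ | c < p.2 ∧ p.2 ≤ p.1} with hs
  have hsm : MeasurableSet s :=
    (measurableSet_lt measurable_const measurable_snd).inter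
      (measurableSet_le measurable_snd measurable_fst)
  set k : ℝ × ℝ → ℝ≥0∞ := s.indicator (fun p => g p.1 * h p.2) with hk
  have hkm : Measurable k :=
    ((hg.comp measurable_fst).mul (hh.comp measurable_snd)).indicator hsm
  have left : ∀ x : ℝ, ∫⁻ t, k (x, t) ∂ν = g x * ∫⁻ t in Ioc c x, h t ∂ν := by
    intro x
    have : ∀ t, k (x, t) = (Ioc c x).indicator (fun t => g x * h t) t := by
      intro t
      simp only [hk, Set.indicator_apply, hs, mem_setOf_eq, mem_Ioc]
    simp_rw [this]
    rw [lintegral_indicator measurableSet_Ioc, lintegral_const_mul _ hh]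
  have right : ∀ t : ℝ, ∫⁻ x, k (x, t) ∂(μ.restrict A)
      = (Ioi c).indicator (fun t => h t * ∫⁻ x in Ici t, g x ∂(μ.restrict A)) t := by
    intro t
    by_cases hct : c < t
    · have : ∀ x, k (x, t) = (Ici t).indicator (fun x => g x * h t) x := by
        intro x
        simp only [hk, Set.indicator_apply, hs, mem_setOf_eq, mem_Ici, hct, true_and]
      simp_rw [this]
      rw [lintegral_indicator measurableSet_Ici, lintegral_mul_const _ hg,
        Set.indicator_of_mem (mem_Ioi.2 hct), mul_comm]
    · have : ∀ x, k (x, t) = 0 := by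
        intro x
        apply Set.indicator_of_notMem
        simp only [hs, mem_setOf_eq]
        tauto
      simp_rw [this]
      rw [lintegral_zero, Set.indicator_of_notMem (by simpa using hct)]
  calc ∫⁻ x in A, g x * ∫⁻ t in Ioc c x, h t ∂ν ∂μ
      = ∫⁻ x, ∫⁻ t, k (x, t) ∂ν ∂(μ.restrict A) := by simp_rw [left]
    _ = ∫⁻ t, ∫⁻ x, k (x, t) ∂(μ.restrict A) ∂ν := by
        exact lintegral_lintegral_swap (by exact hkm.aemeasurable)
    _ = ∫⁻ t in Ioi c, h t * ∫⁻ x in Ici t, g x ∂(μ.restrict A) ∂ν := by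
        simp_rw [right]
        rw [lintegral_indicator measurableSet_Ioi]

theorem main
    (S : ℝ → ℝ) (hScont : Continuous S) (hSmono : StrictMono S)
    (hStop : Filter.Tendsto S Filter.atTop Filter.atTop)
    (hSbot : Filter.Tendsto S Filter.atBot Filter.atBot)
    (μS : Measure ℝ)
    (hμS : ∀ c d : ℝ, c ≤ d → μS (Ioc c d) = ENNReal.ofReal (S d - S c))
    (m : Measure ℝ) [IsFiniteMeasure m]
    (a : ℝ) (B : ℝ≥0∞)
    (hB : B = ⨆ x ∈ Ici a, m (Ioi x) * ENNReal.ofReal (S x - S a))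
    (F f : ℝ → ℝ) (hfmeas : Measurable f)
    (hfint : Integrable f μS)
    (hdF : ∀ c d : ℝ, c < d → F d - F c = ∫ t in Ioc c d, f t ∂μS) :
    ∫⁻ x in Ioi a, ENNReal.ofReal ((F x - F a) ^ 2) ∂m ≤
      4 * B * ∫⁻ t in Ioi a, ENNReal.ofReal (f t ^ 2) ∂μS := by
  -- basic objects
  have hSm : Measurable S := hScont.measurable
  have hSsurj : Function.Surjective S := Continuous.surjective hScont hStop hSbot
  haveI hσ : SigmaFinite μS := by
    refine ⟨⟨⟨fun n => Ioc (-(n:ℝ)) n, fun _ => trivial, fun n => ?_, ?_⟩⟩⟩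
    · rw [hμS _ _ (by simp [neg_le_self_iff])]
      exact ENNReal.ofReal_lt_top
    · refine eq_univ_iff_forall.2 fun x => mem_iUnion.2 ?_
      obtain ⟨n, hn⟩ := exists_nat_gt |x|
      have h1 := abs_lt.1 hn
      exact ⟨n, h1.1, (le_abs_self x).trans hn.le⟩
  have hpre : ∀ c d : ℝ, S ⁻¹' Ioc (S c) (S d) = Ioc c d := by
    intro c d; ext t
    simp [mem_Ioc, hSmono.lt_iff_lt, hSmono.le_iff_le]
  have hmapIoc : ∀ u v : ℝ, u < v → (Measure.map S μS) (Ioc u v) = ENNReal.ofReal (v - u) := by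
    intro u v huv
    obtain ⟨c, rfl⟩ := hSsurj u
    obtain ⟨d, rfl⟩ := hSsurj v
    rw [Measure.map_apply hSm measurableSet_Ioc, hpre,
      hμS c d (le_of_lt (hSmono.lt_iff_lt.1 huv))]
  have hmap : Measure.map S μS = volume := by
    refine Measure.ext_of_Ioc' _ _ (fun u v huv => ?_) (fun u v huv => ?_)
    · rw [hmapIoc u v huv]; exact ENNReal.ofReal_ne_top
    · rw [hmapIoc u v huv, Real.volume_Ioc]
  have hSemb : MeasurableEmbedding S := by
    have h := (StrictMono.orderIsoOfSurjective S hSmono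
      hSsurj).toHomeomorph.isClosedEmbedding.measurableEmbedding
    exact h
  have hmp : MeasurePreserving S μS volume := ⟨hSm, hmap⟩
  have hpull : ∀ (g : ℝ → ℝ≥0∞) (A : Set ℝ),
      ∫⁻ t in S ⁻¹' A, g (S t) ∂μS = ∫⁻ u in A, g u :=
    fun g A => hmp.setLIntegral_comp_preimage_emb hSemb g A
  set W : ℝ → ℝ≥0∞ := fun t => ENNReal.ofReal (S t - S a) with hW
  have hWm : Measurable W := ((hScont.sub continuous_const).measurable).ennreal_ofReal
  have hWpos : ∀ {t : ℝ}, a < t → W t ≠ 0 := by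
    intro t ht
    simp only [hW, ne_eq, ENNReal.ofReal_eq_zero, not_le]
    exact sub_pos.2 (hSmono ht)
  have hWtop : ∀ t : ℝ, W t ≠ ⊤ := fun t => ENNReal.ofReal_ne_top
  -- the two Stieltjes integral computations
  have hC : ∀ x : ℝ, a < x →
      ∫⁻ s in Ioc a x, W s ^ (-(1/2) : ℝ) ∂μS = 2 * W x ^ ((1/2) : ℝ) := by
    intro x hx
    have hc : (0:ℝ) < S x - S a := sub_pos.2 (hSmono hx)
    have e1 : ∫⁻ s in Ioc a x, W s ^ (-(1/2) : ℝ) ∂μS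
        = ∫⁻ u in Ioc (S a) (S x), ENNReal.ofReal (u - S a) ^ (-(1/2) : ℝ) := by
      rw [← hpre a x]
      exact hpull (fun u => ENNReal.ofReal (u - S a) ^ (-(1/2) : ℝ)) _
    have hset : (fun v : ℝ => v + S a) ⁻¹' Ioc (S a) (S x) = Ioc 0 (S x - S a) := by
      ext v
      simp only [mem_preimage, mem_Ioc]
      constructor <;> rintro ⟨h1, h2⟩ <;> constructor <;> linarith
    have e2 : ∫⁻ u in Ioc (S a) (S x), ENNReal.ofReal (u - S a) ^ (-(1/2) : ℝ)
        = ∫⁻ v in Ioc (0:ℝ) (S x - S a), ENNReal.ofReal v ^ (-(1/2) : ℝ) := by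
      have := lintegral_shift (S a)
        (fun u => ENNReal.ofReal (u - S a) ^ (-(1/2) : ℝ)) (Ioc (S a) (S x))
      rw [hset] at this
      rw [← this]
      simp only [add_sub_cancel_right]
    rw [e1, e2, aux_Ioc_rpow hc.le, ENNReal.ofReal_mul (by norm_num)]
    congr 1
    · norm_num
    · rw [Real.sqrt_eq_rpow, ← ENNReal.ofReal_rpow_of_pos hc]
  have hD : ∀ t : ℝ, a < t →
      ∫⁻ s in Ioi t, W s ^ (-(3/2) : ℝ) ∂μS = 2 * W t ^ (-(1/2) : ℝ) := by
    intro t ht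
    have hc : (0:ℝ) < S t - S a := sub_pos.2 (hSmono ht)
    have hpreIoi : S ⁻¹' Ioi (S t) = Ioi t := by
      ext s; simp [mem_Ioi, hSmono.lt_iff_lt]
    have e1 : ∫⁻ s in Ioi t, W s ^ (-(3/2) : ℝ) ∂μS
        = ∫⁻ u in Ioi (S t), ENNReal.ofReal (u - S a) ^ (-(3/2) : ℝ) := by
      rw [← hpreIoi]
      exact hpull (fun u => ENNReal.ofReal (u - S a) ^ (-(3/2) : ℝ)) _
    have hset : (fun v : ℝ => v + S a) ⁻¹' Ioi (S t) = Ioi (S t - S a) := by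
      ext v
      simp only [mem_preimage, mem_Ioi]
      constructor <;> intro h <;> linarith
    have e2 : ∫⁻ u in Ioi (S t), ENNReal.ofReal (u - S a) ^ (-(3/2) : ℝ)
        = ∫⁻ v in Ioi (S t - S a), ENNReal.ofReal v ^ (-(3/2) : ℝ) := by
      have := lintegral_shift (S a)
        (fun u => ENNReal.ofReal (u - S a) ^ (-(3/2) : ℝ)) (Ioi (S t))
      rw [hset] at this
      rw [← this]
      simp only [add_sub_cancel_right]
    rw [e1, e2, aux_Ioi_rpow hc, div_eq_mul_inv, ENNReal.ofReal_mul (by norm_num),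
      ENNReal.ofReal_inv_of_pos (Real.sqrt_pos.2 hc)]
    congr 1
    · norm_num
    · rw [Real.sqrt_eq_rpow, ← ENNReal.ofReal_rpow_of_pos hc, ← ENNReal.rpow_neg]
  -- the Muckenhoupt bound including the closed end-point
  have hBound : ∀ s : ℝ, a < s → m (Ici s) * W s ≤ B := by
    intro s hs
    have key : ∀ y ∈ Ioo a s, m (Ici s) * ENNReal.ofReal (S y - S a) ≤ B := by
      intro y hy
      calc m (Ici s) * ENNReal.ofReal (S y - S a)
          ≤ m (Ioi y) * ENNReal.ofReal (S y - S a) :=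
            mul_le_mul_left (measure_mono fun z hz => lt_of_lt_of_le hy.2 hz) _
        _ ≤ B := by
            rw [hB]
            exact le_biSup (fun x => m (Ioi x) * ENNReal.ofReal (S x - S a))
              (le_of_lt hy.1)
    have htend : Filter.Tendsto (fun y => m (Ici s) * ENNReal.ofReal (S y - S a))
        (nhdsWithin s (Iio s)) (nhds (m (Ici s) * W s)) := by
      refine ENNReal.Tendsto.const_mul ?_ (Or.inr (measure_ne_top m _))
      exact ((ENNReal.continuous_ofReal.comp (hScont.sub continuous_const)).tendsto s).mono_left
        nhdsWithin_le_nhds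
    refine le_of_tendsto htend ?_
    filter_upwards [Ioo_mem_nhdsLT_of_mem (show s ∈ Ioc a s from ⟨hs, le_rfl⟩)] with y hy
    exact key y hy
  -- measurability helpers
  have hWhalf : Measurable fun x => W x ^ ((1/2) : ℝ) := hWm.pow_const _
  have hWneg : Measurable fun s => W s ^ (-(1/2) : ℝ) := hWm.pow_const _
  have hf2m : Measurable fun t => ENNReal.ofReal (f t ^ 2) :=
    (hfmeas.pow_const 2).ennreal_ofReal
  have hhm : Measurable fun t => ENNReal.ofReal (f t ^ 2) * W t ^ ((1/2) : ℝ) :=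
    hf2m.mul hWhalf
  -- the inner weighted-measure bound
  have hJ : ∀ t ∈ Ioi a, ∫⁻ x in Ici t, W x ^ ((1/2) : ℝ) ∂(m.restrict (Ioi a))
      ≤ 2 * B * W t ^ (-(1/2) : ℝ) := by
    intro t ht
    rw [mem_Ioi] at ht
    have step1 : ∫⁻ x in Ici t, W x ^ ((1/2) : ℝ) ∂(m.restrict (Ioi a))
        ≤ ∫⁻ x in Ici t, W x ^ ((1/2) : ℝ) ∂m := by
      rw [Measure.restrict_restrict measurableSet_Ici]
      exact lintegral_mono' (Measure.restrict_mono inter_subset_left le_rfl) le_rfl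
    refine step1.trans ?_
    have step2 : ∫⁻ x in Ici t, W x ^ ((1/2) : ℝ) ∂m
        = ∫⁻ x in Ici t, (2:ℝ≥0∞)⁻¹ * ∫⁻ s in Ioc a x, W s ^ (-(1/2) : ℝ) ∂μS ∂m := by
      refine setLIntegral_congr_fun measurableSet_Ici
        (fun x hx => ?_)
      rw [hC x (lt_of_lt_of_le ht hx), ← mul_assoc,
        ENNReal.inv_mul_cancel two_ne_zero ENNReal.ofNat_ne_top, one_mul]
    rw [step2, swap_lemma m μS (fun _ => (2:ℝ≥0∞)⁻¹) (fun s => W s ^ (-(1/2) : ℝ))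
      measurable_const hWneg a (Ici t) measurableSet_Ici]
    have inner_eq : ∀ s : ℝ, ∫⁻ _ in Ici s, (2:ℝ≥0∞)⁻¹ ∂(m.restrict (Ici t))
        = 2⁻¹ * m (Ici s ∩ Ici t) := by
      intro s
      rw [setLIntegral_const, Measure.restrict_apply measurableSet_Ici]
    have hsplit : Ioc a t ∪ Ioi t = Ioi a := Ioc_union_Ioi_eq_Ioi ht.le
    rw [← hsplit, lintegral_union measurableSet_Ioi (Ioc_disjoint_Ioi le_rfl)]
    have hmt : ∀ s : ℝ, a < s → m (Ici s) ≤ B / W s := fun s hs =>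
      (ENNReal.le_div_iff_mul_le (Or.inl (hWpos hs)) (Or.inl (hWtop s))).2 (hBound s hs)
    have piece1 : ∫⁻ s in Ioc a t, W s ^ (-(1/2) : ℝ) *
          ∫⁻ _ in Ici s, (2:ℝ≥0∞)⁻¹ ∂(m.restrict (Ici t)) ∂μS ≤ B * W t ^ (-(1/2) : ℝ) := by
      have hb : ∀ s ∈ Ioc a t, W s ^ (-(1/2) : ℝ) *
            ∫⁻ _ in Ici s, (2:ℝ≥0∞)⁻¹ ∂(m.restrict (Ici t))
          ≤ W s ^ (-(1/2) : ℝ) * (2⁻¹ * (B / W t)) := by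
        intro s hs
        rw [inner_eq s, inter_eq_right.2 (Ici_subset_Ici.2 hs.2)]
        exact mul_le_mul_right (mul_le_mul_right (hmt t ht) _) _
      calc ∫⁻ s in Ioc a t, W s ^ (-(1/2) : ℝ) *
              ∫⁻ _ in Ici s, (2:ℝ≥0∞)⁻¹ ∂(m.restrict (Ici t)) ∂μS
          ≤ ∫⁻ s in Ioc a t, W s ^ (-(1/2) : ℝ) * (2⁻¹ * (B / W t)) ∂μS :=
            setLIntegral_mono' measurableSet_Ioc hb
        _ = (∫⁻ s in Ioc a t, W s ^ (-(1/2) : ℝ) ∂μS) * (2⁻¹ * (B / W t)) :=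
            lintegral_mul_const _ hWneg
        _ = (2 * W t ^ ((1/2) : ℝ)) * (2⁻¹ * (B / W t)) := by rw [hC t ht]
        _ = B * W t ^ (-(1/2) : ℝ) := by
            rw [div_eq_mul_inv B (W t), ← ENNReal.rpow_neg_one (W t)]
            calc (2 * W t ^ ((1/2) : ℝ)) * (2⁻¹ * (B * W t ^ (-1 : ℝ)))
                = (2 * 2⁻¹) * (B * (W t ^ ((1/2) : ℝ) * W t ^ (-1 : ℝ))) := by ring
              _ = B * W t ^ (-(1/2) : ℝ) := by
                  rw [ENNReal.mul_inv_cancel two_ne_zero ENNReal.ofNat_ne_top, one_mul,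
                    ← ENNReal.rpow_add _ _ (hWpos ht) (hWtop t)]
                  norm_num
    have piece2 : ∫⁻ s in Ioi t, W s ^ (-(1/2) : ℝ) *
          ∫⁻ _ in Ici s, (2:ℝ≥0∞)⁻¹ ∂(m.restrict (Ici t)) ∂μS ≤ B * W t ^ (-(1/2) : ℝ) := by
      have hb : ∀ s ∈ Ioi t, W s ^ (-(1/2) : ℝ) *
            ∫⁻ _ in Ici s, (2:ℝ≥0∞)⁻¹ ∂(m.restrict (Ici t))
          ≤ 2⁻¹ * B * W s ^ (-(3/2) : ℝ) := by
        intro s hs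
        rw [mem_Ioi] at hs
        have has : a < s := ht.trans hs
        rw [inner_eq s, inter_eq_left.2 (Ici_subset_Ici.2 hs.le)]
        calc W s ^ (-(1/2) : ℝ) * (2⁻¹ * m (Ici s))
            ≤ W s ^ (-(1/2) : ℝ) * (2⁻¹ * (B / W s)) :=
              mul_le_mul_right (mul_le_mul_right (hmt s has) _) _
          _ = 2⁻¹ * B * W s ^ (-(3/2) : ℝ) := by
              rw [div_eq_mul_inv B (W s), ← ENNReal.rpow_neg_one (W s)]
              calc W s ^ (-(1/2) : ℝ) * (2⁻¹ * (B * W s ^ (-1 : ℝ)))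
                  = 2⁻¹ * B * (W s ^ (-(1/2) : ℝ) * W s ^ (-1 : ℝ)) := by ring
                _ = 2⁻¹ * B * W s ^ (-(3/2) : ℝ) := by
                    rw [← ENNReal.rpow_add _ _ (hWpos has) (hWtop s)]
                    norm_num
      calc ∫⁻ s in Ioi t, W s ^ (-(1/2) : ℝ) *
              ∫⁻ _ in Ici s, (2:ℝ≥0∞)⁻¹ ∂(m.restrict (Ici t)) ∂μS
          ≤ ∫⁻ s in Ioi t, 2⁻¹ * B * W s ^ (-(3/2) : ℝ) ∂μS :=
            setLIntegral_mono' measurableSet_Ioi hb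
        _ = 2⁻¹ * B * ∫⁻ s in Ioi t, W s ^ (-(3/2) : ℝ) ∂μS :=
            lintegral_const_mul _ (hWm.pow_const _)
        _ = B * W t ^ (-(1/2) : ℝ) := by
            rw [hD t ht]
            calc 2⁻¹ * B * (2 * W t ^ (-(1/2) : ℝ))
                = (2 * 2⁻¹) * (B * W t ^ (-(1/2) : ℝ)) := by ring
              _ = B * W t ^ (-(1/2) : ℝ) := by
                  rw [ENNReal.mul_inv_cancel two_ne_zero ENNReal.ofNat_ne_top, one_mul]
    calc ∫⁻ s in Ioc a t, W s ^ (-(1/2) : ℝ) *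
            ∫⁻ _ in Ici s, (2:ℝ≥0∞)⁻¹ ∂(m.restrict (Ici t)) ∂μS
          + ∫⁻ s in Ioi t, W s ^ (-(1/2) : ℝ) *
            ∫⁻ _ in Ici s, (2:ℝ≥0∞)⁻¹ ∂(m.restrict (Ici t)) ∂μS
        ≤ B * W t ^ (-(1/2) : ℝ) + B * W t ^ (-(1/2) : ℝ) := add_le_add piece1 piece2
      _ = 2 * B * W t ^ (-(1/2) : ℝ) := by ring
  -- pointwise Cauchy–Schwarz bound
  set A' : ℝ → ℝ≥0∞ :=
    fun x => ∫⁻ t in Ioc a x, ENNReal.ofReal (f t ^ 2) * W t ^ ((1/2) : ℝ) ∂μS with hA'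
  have hA'mono : Monotone A' := fun x₁ x₂ h =>
    lintegral_mono_set (Ioc_subset_Ioc_right h)
  have hA'meas : Measurable A' := hA'mono.measurable
  have hkey : ∀ x ∈ Ioi a,
      ENNReal.ofReal ((F x - F a) ^ 2) ≤ A' x * (2 * W x ^ ((1/2) : ℝ)) := by
    intro x hx
    rw [mem_Ioi] at hx
    set φ : ℝ → ℝ≥0∞ := fun t => ENNReal.ofReal |f t| * W t ^ ((1/4) : ℝ) with hφ
    set ψ : ℝ → ℝ≥0∞ := fun t => W t ^ (-(1/4) : ℝ) with hψ
    have hφm : Measurable φ := (hfmeas.abs.ennreal_ofReal).mul (hWm.pow_const _)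
    have hψm : Measurable ψ := hWm.pow_const _
    set I : ℝ≥0∞ := ∫⁻ t in Ioc a x, ENNReal.ofReal |f t| ∂μS with hI
    have h1 : ENNReal.ofReal ((F x - F a) ^ 2) ≤ I ^ (2 : ℕ) := by
      have habs : |F x - F a| ≤ ∫ t in Ioc a x, |f t| ∂μS := by
        rw [hdF a x hx]
        simpa [Real.norm_eq_abs] using
          norm_integral_le_integral_norm (μ := μS.restrict (Ioc a x)) f
      have hIeq : ENNReal.ofReal (∫ t in Ioc a x, |f t| ∂μS) = I :=
        ofReal_integral_eq_lintegral_ofReal (hfint.restrict.abs)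
          (Filter.Eventually.of_forall fun t => abs_nonneg _)
      have hle : ENNReal.ofReal |F x - F a| ≤ I :=
        (ENNReal.ofReal_le_ofReal habs).trans_eq hIeq
      calc ENNReal.ofReal ((F x - F a) ^ 2)
          = ENNReal.ofReal |F x - F a| ^ (2 : ℕ) := by
            rw [← sq_abs, ENNReal.ofReal_pow (abs_nonneg _)]
        _ ≤ I ^ (2 : ℕ) := pow_le_pow_left₀ zero_le hle 2
    have hcs : I ≤ (∫⁻ t in Ioc a x, φ t ^ (2:ℝ) ∂μS) ^ ((1:ℝ)/2) *
        (∫⁻ t in Ioc a x, ψ t ^ (2:ℝ) ∂μS) ^ ((1:ℝ)/2) := by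
      have hIeq2 : I = ∫⁻ t in Ioc a x, (φ * ψ) t ∂μS := by
        refine setLIntegral_congr_fun measurableSet_Ioc
          (fun t ht => ?_)
        have : φ t * ψ t = ENNReal.ofReal |f t| * (W t ^ ((1/4) : ℝ) * W t ^ (-(1/4) : ℝ)) := by
          simp only [hφ, hψ]; ring
        simp only [Pi.mul_apply, this,
          ← ENNReal.rpow_add _ _ (hWpos ht.1) (hWtop t)]
        norm_num
      rw [hIeq2]
      exact ENNReal.lintegral_mul_le_Lp_mul_Lq _ (Real.holderConjugate_iff.mpr ⟨one_lt_two, by norm_num⟩)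
        hφm.aemeasurable hψm.aemeasurable
    have hφ2 : ∀ t : ℝ, φ t ^ (2:ℝ) = ENNReal.ofReal (f t ^ 2) * W t ^ ((1/2) : ℝ) := by
      intro t
      rw [hφ, ENNReal.mul_rpow_of_nonneg _ _ (by norm_num : (0:ℝ) ≤ 2),
        ENNReal.ofReal_rpow_of_nonneg (abs_nonneg _) (by norm_num),
        show |f t| ^ (2:ℝ) = f t ^ 2 by
          rw [show (2:ℝ) = ((2:ℕ):ℝ) by norm_num, Real.rpow_natCast, sq_abs],
        ← ENNReal.rpow_mul]
      norm_num
    have hψ2 : ∀ t : ℝ, ψ t ^ (2:ℝ) = W t ^ (-(1/2) : ℝ) := by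
      intro t
      rw [hψ, ← ENNReal.rpow_mul]
      norm_num
    have hsq : ∀ Y : ℝ≥0∞, (Y ^ ((1:ℝ)/2)) ^ (2:ℕ) = Y := by
      intro Y
      rw [← ENNReal.rpow_natCast (Y ^ ((1:ℝ)/2)) 2, ← ENNReal.rpow_mul]
      norm_num
    have hint1 : ∫⁻ t in Ioc a x, φ t ^ (2:ℝ) ∂μS = A' x := by
      simp_rw [hφ2]
      rfl
    have hint2 : ∫⁻ t in Ioc a x, ψ t ^ (2:ℝ) ∂μS = 2 * W x ^ ((1/2) : ℝ) := by
      simp_rw [hψ2]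
      exact hC x hx
    calc ENNReal.ofReal ((F x - F a) ^ 2) ≤ I ^ (2 : ℕ) := h1
      _ ≤ ((A' x) ^ ((1:ℝ)/2) * (2 * W x ^ ((1/2) : ℝ)) ^ ((1:ℝ)/2)) ^ (2 : ℕ) := by
          refine pow_le_pow_left₀ zero_le ?_ 2
          rw [← hint1, ← hint2]
          exact hcs
      _ = A' x * (2 * W x ^ ((1/2) : ℝ)) := by
          rw [mul_pow, hsq, hsq]
  -- put everything together
  calc ∫⁻ x in Ioi a, ENNReal.ofReal ((F x - F a) ^ 2) ∂m
      ≤ ∫⁻ x in Ioi a, 2 * (W x ^ ((1/2) : ℝ) * A' x) ∂m := by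
        refine setLIntegral_mono' measurableSet_Ioi fun x hx => ?_
        refine (hkey x hx).trans_eq ?_
        ring
    _ = 2 * ∫⁻ x in Ioi a, W x ^ ((1/2) : ℝ) * A' x ∂m :=
        lintegral_const_mul _ (hWhalf.mul hA'meas)
    _ = 2 * ∫⁻ t in Ioi a, (ENNReal.ofReal (f t ^ 2) * W t ^ ((1/2) : ℝ)) *
          ∫⁻ x in Ici t, W x ^ ((1/2) : ℝ) ∂(m.restrict (Ioi a)) ∂μS := by
        rw [swap_lemma m μS _ _ hWhalf hhm a (Ioi a) measurableSet_Ioi]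
    _ ≤ 2 * ∫⁻ t in Ioi a, (ENNReal.ofReal (f t ^ 2) * W t ^ ((1/2) : ℝ)) *
          (2 * B * W t ^ (-(1/2) : ℝ)) ∂μS := by
        refine mul_le_mul_right (setLIntegral_mono' measurableSet_Ioi fun t ht => ?_) 2
        exact mul_le_mul_right (hJ t ht) _
    _ = 2 * ∫⁻ t in Ioi a, (2 * B) * ENNReal.ofReal (f t ^ 2) ∂μS := by
        refine congrArg _ (setLIntegral_congr_fun measurableSet_Ioi
          (fun t ht => ?_))
        rw [mem_Ioi] at ht
        calc (ENNReal.ofReal (f t ^ 2) * W t ^ ((1/2) : ℝ)) * (2 * B * W t ^ (-(1/2) : ℝ))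
            = (2 * B) * ENNReal.ofReal (f t ^ 2) *
              (W t ^ ((1/2) : ℝ) * W t ^ (-(1/2) : ℝ)) := by ring
          _ = (2 * B) * ENNReal.ofReal (f t ^ 2) := by
              rw [← ENNReal.rpow_add _ _ (hWpos ht) (hWtop t)]
              norm_num
    _ = 4 * B * ∫⁻ t in Ioi a, ENNReal.ofReal (f t ^ 2) ∂μS := by
        rw [lintegral_const_mul _ hf2m, ← mul_assoc]
        congr 1
        rw [← mul_assoc]
        norm_num

end HardyAux


/-- If `B⁺ₐ < ∞`, then the Hardy inequality over `(a,∞)` holds with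
constant `4 · B⁺ₐ`: for every `F ∈ 𝓕` (with density `f = dF/dS`),
`∫_{(a,∞)} (F(x) − F(a))² dm ≤ 4·B⁺ₐ · ∫_{(a,∞)} f² dS`. -/
theorem hardy_upper_bound_right
    (S : ℝ → ℝ) (hScont : Continuous S) (hSmono : StrictMono S)
    (hStop : Filter.Tendsto S Filter.atTop Filter.atTop)
    (hSbot : Filter.Tendsto S Filter.atBot Filter.atBot)
    (μS : Measure ℝ)
    (hμS : ∀ c d : ℝ, c ≤ d → μS (Ioc c d) = ENNReal.ofReal (S d - S c))
    (m : Measure ℝ) [IsFiniteMeasure m]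
    (a : ℝ)
    (B : ℝ≥0∞)
    (hB : B = ⨆ x ∈ Ici a, m (Ioi x) * ENNReal.ofReal (S x - S a))
    (hBfin : B ≠ ⊤)
    (F f : ℝ → ℝ)
    (hFL2 : MemLp F 2 m)
    (hfint : Integrable f μS)
    (hfL2 : MemLp f 2 μS)
    (hdF : ∀ c d : ℝ, c < d → F d - F c = ∫ t in Ioc c d, f t ∂μS) :
    ∫⁻ x in Ioi a, ENNReal.ofReal ((F x - F a) ^ 2) ∂m ≤
      4 * B * ∫⁻ t in Ioi a, ENNReal.ofReal (f t ^ 2) ∂μS := by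
  obtain ⟨f', hf'sm, hff'⟩ : ∃ f', StronglyMeasurable f' ∧ f =ᵐ[μS] f' :=
    ⟨hfint.1.mk f, hfint.1.stronglyMeasurable_mk, hfint.1.ae_eq_mk⟩
  have hfint' : Integrable f' μS := hfint.congr hff'
  have hdF' : ∀ c d : ℝ, c < d → F d - F c = ∫ t in Ioc c d, f' t ∂μS := by
    intro c d hcd
    rw [hdF c d hcd]
    exact integral_congr_ae (ae_restrict_of_ae hff')
  have hres : ∫⁻ t in Ioi a, ENNReal.ofReal (f t ^ 2) ∂μS
      = ∫⁻ t in Ioi a, ENNReal.ofReal (f' t ^ 2) ∂μS := by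
    refine lintegral_congr_ae ?_
    filter_upwards [ae_restrict_of_ae hff'] with t ht
    rw [ht]
  rw [hres]
  exact HardyAux.main S hScont hSmono hStop hSbot μS hμS m a B hB F f'
    hf'sm.measurable hfint' hdF'
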